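/- Let (R,m,K) be a complete Noetherian local ring of prime characteristic p possessing a test element, and let M be an Artinian R-module. Let τ^{fg}_M = {f ∈ M^∨ : f(0*fg_M) = 0} be the annihilator in the Matlis dual M^∨ of the finitistic tight closure of zero in M. Then for every ideal I of R one has I* · τ^{fg}_M = I · τ^{fg}_M (as submodules of M^∨). -/

import Mathlib

open scoped TensorProduct Pointwise

universe u v w

section TightClosureDefs

variable (R : Type u) [CommRing R] (p : ℕ)

/-- `R^o`: the complement of the union of the minimal primes of `R`. -/
def Ro : Set R := {c | ∀ P ∈ minimalPrimes R, c ∉ P}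

/-- The Frobenius power `I^{[q]}` of an ideal: the ideal generated by the `q`-th
powers of the elements of `I`. -/
def frobeniusPower (I : Ideal R) (q : ℕ) : Ideal R :=
  Ideal.span ((fun x => x ^ q) '' (I : Set R))

/-- The tight closure `I*` of an ideal `I`: all `x` such that `c x^q ∈ I^{[q]}` for some
`c ∈ R^o` and all `q = p^e ≫ 0`. -/
def idealTC (I : Ideal R) : Set R :=
  {x | ∃ c ∈ Ro R, ∃ e₀ : ℕ, ∀ e ≥ e₀, c * x ^ p ^ e ∈ frobeniusPower R I (p ^ e)}

/-- `R^e`: `R` viewed as an `R`-algebra via the `e`-th iterated Frobenius `r ↦ r^{p^e}`. -/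
def FrobAlg (R : Type u) [CommRing R] (_p _e : ℕ) : Type u := R

instance FrobAlg.instCommRing (e : ℕ) : CommRing (FrobAlg R p e) := inferInstanceAs (CommRing R)

noncomputable instance FrobAlg.instAlgebra (e : ℕ) [ExpChar R p] : Algebra R (FrobAlg R p e) :=
  (iterateFrobenius R p e).toAlgebra

/-- The identity map of `R` into `FrobAlg R p e`. -/
def FrobAlg.mk (e : ℕ) : R → FrobAlg R p e := id

variable [ExpChar R p]

/-- `N^{[p^e]}_M`: the image of `F^e(N) → F^e(M)`, where `F^e(M) = R^e ⊗_R M` is the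
`e`-th Frobenius functor. -/
noncomputable def submoduleFrobPow {M : Type v} [AddCommGroup M] [Module R M]
    (N : Submodule R M) (e : ℕ) : Submodule R (FrobAlg R p e ⊗[R] M) :=
  LinearMap.range (LinearMap.lTensor (FrobAlg R p e) N.subtype)

/-- The tight closure `N*_M` of a submodule `N ⊆ M`: all `m` such that
`c ⊗ m ∈ N^{[q]}_M` for some `c ∈ R^o` and all `q = p^e ≫ 0`. -/
noncomputable def moduleTC {M : Type v} [AddCommGroup M] [Module R M]
    (N : Submodule R M) : Set M :=
  {m | ∃ c ∈ Ro R, ∃ e₀ : ℕ, ∀ e ≥ e₀,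
    (FrobAlg.mk R p e c) ⊗ₜ[R] m ∈ submoduleFrobPow R p N e}

/-- The finitistic tight closure `N*fg_M`: the union of `(N ∩ M')*_{M'}` over all
finitely generated submodules `M' ⊆ M`. -/
noncomputable def finitisticTC {M : Type v} [AddCommGroup M] [Module R M]
    (N : Submodule R M) : Set M :=
  ⋃ (M' : Submodule R M) (_ : M'.FG),
    (M'.subtype '' moduleTC R p (N.comap M'.subtype))

/-- A test element: `c ∈ R^o` such that `c I* ⊆ I` for every ideal `I`. -/
def IsTestElement (c : R) : Prop :=
  c ∈ Ro R ∧ ∀ I : Ideal R, ∀ x ∈ idealTC R p I, c * x ∈ I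

/-- A module test element: `c ∈ R^o` such that for every finitely generated module `M`,
every submodule `N ⊆ M`, every `x ∈ N*_M` and every `q = p^e`, `c ⊗ x ∈ N^{[q]}_M`. -/
def IsModuleTestElement (c : R) : Prop :=
  c ∈ Ro R ∧ ∀ (M : Type u) [AddCommGroup M] [Module R M], Module.Finite R M →
    ∀ (N : Submodule R M), ∀ x ∈ moduleTC R p N, ∀ e : ℕ,
      (FrobAlg.mk R p e c) ⊗ₜ[R] x ∈ submoduleFrobPow R p N e

/-- The annihilator, inside the Matlis-type dual `Hom_R(M, E)`, of a subset `S ⊆ M`. -/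
def annihilatorIn {M : Type v} {E : Type w} [AddCommGroup M] [Module R M]
    [AddCommGroup E] [Module R E] (S : Set M) : Submodule R (M →ₗ[R] E) where
  carrier := {f | ∀ x ∈ S, f x = 0}
  add_mem' := by intro f g hf hg x hx; simp [hf x hx, hg x hx]
  zero_mem' := by intro x hx; simp
  smul_mem' := by intro r f hf x hx; simp [hf x hx]

/-- The product `s · T` of a set of ring elements and a submodule: the submodule
generated by all products `a • t` with `a ∈ s`, `t ∈ T`. -/
def setSMulSubmodule {M : Type v} [AddCommGroup M] [Module R M]
    (s : Set R) (T : Submodule R M) : Submodule R M :=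
  Submodule.span R (s • (T : Set M))

/-- `E` is an injective hull of `M` over `R`: `E` is an injective module admitting an
essential embedding of `M`. -/
def IsInjectiveHull (M : Type v) (E : Type w) [AddCommGroup M] [Module R M]
    [AddCommGroup E] [Module R E] : Prop :=
  Module.Injective R E ∧ ∃ ι : M →ₗ[R] E, Function.Injective ι ∧
    ∀ N : Submodule R E, N ≠ ⊥ → N ⊓ LinearMap.range ι ≠ ⊥

/-- The test ideal `τ(R) = ⋂_M Ann_R (0*_M)`, where `M` runs through all finitely
generated `R`-modules. -/
noncomputable def testIdeal : Ideal R where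
  carrier := {c | ∀ (M : Type u) [AddCommGroup M] [Module R M], Module.Finite R M →
    ∀ x ∈ moduleTC R p (⊥ : Submodule R M), c • x = 0}
  add_mem' := by
    intro a b ha hb M _ _ hfin x hx
    rw [add_smul, ha M hfin x hx, hb M hfin x hx, add_zero]
  zero_mem' := by intro M _ _ hfin x hx; rw [zero_smul]
  smul_mem' := by
    intro r a ha M _ _ hfin x hx
    rw [smul_eq_mul, mul_smul, ha M hfin x hx, smul_zero]

/-- An `F`-finite ring: `R` is finitely generated as a module over its subring of
`p`-th powers, i.e. `R^1` is a finite `R`-module. -/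
def IsFFinite : Prop := Module.Finite R (FrobAlg R p 1)

/-- An ideal generated by a system of parameters: generated by `dim R` elements and
with radical the maximal ideal (i.e. primary to the maximal ideal). -/
def IsParameterIdeal [IsLocalRing R] (I : Ideal R) : Prop :=
  ∃ (n : ℕ) (x : Fin n → R), ringKrullDim R = n ∧ I = Ideal.span (Set.range x) ∧
    I.radical = IsLocalRing.maximalIdeal R

/-- The parameter test ideal `τ_par(R) = ⋂_I (I : I*)`, where `I` runs through the
ideals generated by systems of parameters. -/
def parameterTestIdeal [IsLocalRing R] : Ideal R where
  carrier := {c | ∀ I : Ideal R, IsParameterIdeal R I → ∀ z ∈ idealTC R p I, c * z ∈ I}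
  add_mem' := by
    intro a b ha hb I hI z hz
    rw [add_mul]; exact I.add_mem (ha I hI z hz) (hb I hI z hz)
  zero_mem' := by intro I hI z hz; rw [zero_mul]; exact I.zero_mem
  smul_mem' := by
    intro r a ha I hI z hz
    rw [smul_eq_mul, mul_assoc]; exact I.mul_mem_left r (ha I hI z hz)

/-- A parameter test element: an element of `τ_par(R) ∩ R^o`. -/
def IsParameterTestElement [IsLocalRing R] (c : R) : Prop :=
  c ∈ parameterTestIdeal R p ∧ c ∈ Ro R

end TightClosureDefs

/-- A Cohen–Macaulay local ring: a local ring admitting a system of parameters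
(`dim R` elements generating an ideal whose radical is the maximal ideal, here expressed
as the Jacobson radical `(⊥).jacobson`) that is a regular sequence. -/
def IsCohenMacaulayLocalRing (R : Type u) [CommRing R] : Prop :=
  IsLocalRing R ∧ ∃ (n : ℕ) (x : Fin n → R), ringKrullDim R = n ∧
    (Ideal.span (Set.range x)).radical = (⊥ : Ideal R).jacobson ∧
    RingTheory.Sequence.IsRegular R (List.ofFn x)


universe x

/-! ### Auxiliary lemmas -/

section AuxTC

variable {R : Type u} [CommRing R]

lemma Ro.one_mem : (1 : R) ∈ Ro R := fun P hP h1 =>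
  hP.1.1.ne_top ((Ideal.eq_top_iff_one P).mpr h1)

lemma Ro.mul_mem {a b : R} (ha : a ∈ Ro R) (hb : b ∈ Ro R) : a * b ∈ Ro R := by
  intro P hP hab
  rcases hP.1.1.mem_or_mem hab with h | h
  exacts [ha P hP h, hb P hP h]

variable {p : ℕ} [ExpChar R p]

lemma frobAlg_smul (e : ℕ) (r : R) (a : FrobAlg R p e) :
    r • a = FrobAlg.mk R p e (r ^ p ^ e) * a := by
  rw [Algebra.smul_def]
  congr 1

lemma frobPow_bot {M : Type v} [AddCommGroup M] [Module R M] (e : ℕ) :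
    submoduleFrobPow R p (⊥ : Submodule R M) e = ⊥ := by
  have h0 : (⊥ : Submodule R M).subtype = 0 := by
    ext ⟨x, hx⟩
    simpa using (Submodule.mem_bot R).1 hx
  rw [submoduleFrobPow, h0, LinearMap.lTensor_zero, LinearMap.range_zero]

variable {M : Type v} [AddCommGroup M] [Module R M]

lemma comap_subtype_bot (M' : Submodule R M) :
    (⊥ : Submodule R M).comap M'.subtype = ⊥ := by
  rw [Submodule.comap_bot, Submodule.ker_subtype]

lemma mem_ftc_bot (M' : Submodule R M) (hfg : M'.FG) (m : M')
    (c : R) (hc : c ∈ Ro R) (e₀ : ℕ)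
    (h : ∀ e ≥ e₀, FrobAlg.mk R p e c ⊗ₜ[R] m = (0 : FrobAlg R p e ⊗[R] M')) :
    (m : M) ∈ finitisticTC R p (⊥ : Submodule R M) := by
  refine Set.mem_iUnion.2 ⟨M', Set.mem_iUnion.2 ⟨hfg, ⟨m, ?_, rfl⟩⟩⟩
  rw [comap_subtype_bot]
  refine ⟨c, hc, e₀, fun e he => ?_⟩
  rw [frobPow_bot, Submodule.mem_bot]
  exact h e he

lemma ftc_elim {z : M} (hz : z ∈ finitisticTC R p (⊥ : Submodule R M)) :
    ∃ (M' : Submodule R M) (_ : M'.FG) (hzm : z ∈ M') (c : R) (_ : c ∈ Ro R) (e₀ : ℕ),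
      ∀ e ≥ e₀, FrobAlg.mk R p e c ⊗ₜ[R] (⟨z, hzm⟩ : M') = (0 : FrobAlg R p e ⊗[R] M') := by
  rw [finitisticTC] at hz
  simp only [Set.mem_iUnion] at hz
  obtain ⟨M', hfg, m, hm, rfl⟩ := hz
  rw [comap_subtype_bot] at hm
  obtain ⟨c, hc, e₀, h⟩ := hm
  refine ⟨M', hfg, m.2, c, hc, e₀, fun e he => ?_⟩
  have h' := h e he
  rw [frobPow_bot, Submodule.mem_bot] at h'
  simpa using h'

lemma tmul_zero_mono {M₁ M₂ : Submodule R M} (h12 : M₁ ≤ M₂) (e : ℕ) (c : R) {m : M₁}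
    (h : FrobAlg.mk R p e c ⊗ₜ[R] m = (0 : FrobAlg R p e ⊗[R] M₁)) :
    FrobAlg.mk R p e c ⊗ₜ[R] (Submodule.inclusion h12 m) = (0 : FrobAlg R p e ⊗[R] M₂) := by
  have := congrArg (LinearMap.lTensor (FrobAlg R p e) (Submodule.inclusion h12)) h
  simpa using this

lemma tmul_mul_left {N : Type*} [AddCommGroup N] [Module R N] (e : ℕ) (a c : R) {m : N}
    (h : FrobAlg.mk R p e c ⊗ₜ[R] m = (0 : FrobAlg R p e ⊗[R] N)) :
    FrobAlg.mk R p e (a * c) ⊗ₜ[R] m = (0 : FrobAlg R p e ⊗[R] N) := by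
  have := congrArg (fun z : FrobAlg R p e ⊗[R] N => (FrobAlg.mk R p e a) • z) h
  simp only [smul_zero, TensorProduct.smul_tmul', smul_eq_mul] at this
  exact this

variable (R p M) in
/-- The finitistic tight closure of zero, as a submodule. -/
noncomputable def ftcSub : Submodule R M where
  carrier := finitisticTC R p (⊥ : Submodule R M)
  zero_mem' := by
    have := mem_ftc_bot (p := p) (⊥ : Submodule R M) Submodule.fg_bot 0 1 Ro.one_mem 0
      (fun e _ => by rw [TensorProduct.tmul_zero])
    simpa using this
  add_mem' := by
    intro a b ha hb
    obtain ⟨M₁, h1, ha1, c₁, hc₁, e₁, H₁⟩ := ftc_elim ha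
    obtain ⟨M₂, h2, hb2, c₂, hc₂, e₂, H₂⟩ := ftc_elim hb
    have key := mem_ftc_bot (p := p) (M₁ ⊔ M₂) (h1.sup h2)
      ⟨a + b, Submodule.add_mem _ (Submodule.mem_sup_left ha1) (Submodule.mem_sup_right hb2)⟩
      (c₁ * c₂) (Ro.mul_mem hc₁ hc₂) (max e₁ e₂) ?_
    · simpa using key
    intro e he
    have ea : FrobAlg.mk R p e (c₂ * c₁) ⊗ₜ[R]
        (Submodule.inclusion (le_sup_left : M₁ ≤ M₁ ⊔ M₂) ⟨a, ha1⟩) = 0 :=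
      tmul_mul_left e c₂ c₁ (tmul_zero_mono le_sup_left e c₁ (H₁ e (le_of_max_le_left he)))
    have eb : FrobAlg.mk R p e (c₁ * c₂) ⊗ₜ[R]
        (Submodule.inclusion (le_sup_right : M₂ ≤ M₁ ⊔ M₂) ⟨b, hb2⟩) = 0 :=
      tmul_mul_left e c₁ c₂ (tmul_zero_mono le_sup_right e c₂ (H₂ e (le_of_max_le_right he)))
    rw [mul_comm c₂ c₁] at ea
    have hsum : (⟨a + b, Submodule.add_mem _ (Submodule.mem_sup_left ha1) (Submodule.mem_sup_right hb2)⟩ :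
        (M₁ ⊔ M₂ : Submodule R M)) =
        Submodule.inclusion (le_sup_left : M₁ ≤ M₁ ⊔ M₂) ⟨a, ha1⟩ +
        Submodule.inclusion (le_sup_right : M₂ ≤ M₁ ⊔ M₂) ⟨b, hb2⟩ := by
      apply Subtype.ext; rfl
    rw [hsum, TensorProduct.tmul_add, ea, eb, add_zero]
  smul_mem' := by
    intro r z hz
    obtain ⟨M', hfg, hzm, c, hc, e₀, H⟩ := ftc_elim hz
    have := mem_ftc_bot (p := p) M' hfg (r • ⟨z, hzm⟩) c hc e₀ (fun e he => by
      rw [TensorProduct.tmul_smul, H e he, smul_zero])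
    simpa using this

lemma ftcSub_coe : (ftcSub R p M : Set M) = finitisticTC R p (⊥ : Submodule R M) := rfl

/-- Key closure property: if `I • u ⊆ 0*fg` and `x ∈ I*`, then `x • u ∈ 0*fg`. -/
lemma ftc_closure [IsNoetherianRing R] {u : M} {I : Ideal R}
    (hu : ∀ a ∈ I, a • u ∈ ftcSub R p M)
    {x : R} (hx : x ∈ idealTC R p I) :
    x • u ∈ ftcSub R p M := by
  classical
  obtain ⟨s, hs⟩ := IsNoetherian.noetherian I
  have hus : ∀ a ∈ s, a • u ∈ ftcSub R p M := fun a ha =>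
    hu a (by rw [← hs]; exact Submodule.subset_span ha)
  -- combine the data for all generators into one fg module, one `c₀`, one `e₁`
  have key : ∀ t : Finset R, (∀ a ∈ t, a • u ∈ ftcSub R p M) →
      ∃ (M' : Submodule R M) (_ : M'.FG) (hu' : u ∈ M') (c₀ : R) (_ : c₀ ∈ Ro R) (e₁ : ℕ),
        ∀ a ∈ t, ∀ e ≥ e₁,
          FrobAlg.mk R p e c₀ ⊗ₜ[R] (⟨a • u, M'.smul_mem a hu'⟩ : M') =
            (0 : FrobAlg R p e ⊗[R] M') := by
    intro t
    induction t using Finset.induction_on with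
    | empty =>
      intro _
      exact ⟨Submodule.span R {u}, Submodule.fg_span_singleton u,
        Submodule.mem_span_singleton_self u, 1, Ro.one_mem, 0, by simp⟩
    | @insert a₀ s' ha₀ ih =>
      intro ht
      obtain ⟨M', hfg, hu', c₀, hc₀, e₁, H⟩ :=
        ih (fun a ha => ht a (Finset.mem_insert_of_mem ha))
      obtain ⟨Ma, hfa, hma, ca, hca, ea, Ha⟩ :=
        ftc_elim (ht a₀ (Finset.mem_insert_self a₀ s'))
      refine ⟨M' ⊔ Ma, hfg.sup hfa, Submodule.mem_sup_left hu', c₀ * ca,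
        Ro.mul_mem hc₀ hca, max e₁ ea, ?_⟩
      intro b hb e he
      rcases Finset.mem_insert.1 hb with rfl | hb'
      · have h0 : FrobAlg.mk R p e (c₀ * ca) ⊗ₜ[R]
            (Submodule.inclusion (le_sup_right : Ma ≤ M' ⊔ Ma) ⟨b • u, hma⟩) = 0 :=
          tmul_mul_left e c₀ ca (tmul_zero_mono le_sup_right e ca (Ha e (le_of_max_le_right he)))
        have heq : (⟨b • u, (M' ⊔ Ma).smul_mem b (Submodule.mem_sup_left hu')⟩ :
            (M' ⊔ Ma : Submodule R M)) =
            Submodule.inclusion (le_sup_right : Ma ≤ M' ⊔ Ma) ⟨b • u, hma⟩ := by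
          apply Subtype.ext; rfl
        rw [heq]; exact h0
      · have h0 : FrobAlg.mk R p e (ca * c₀) ⊗ₜ[R]
            (Submodule.inclusion (le_sup_left : M' ≤ M' ⊔ Ma)
              ⟨b • u, M'.smul_mem b hu'⟩) = 0 :=
          tmul_mul_left e ca c₀
            (tmul_zero_mono le_sup_left e c₀ (H b hb' e (le_of_max_le_left he)))
        rw [mul_comm ca c₀] at h0
        have heq : (⟨b • u, (M' ⊔ Ma).smul_mem b (Submodule.mem_sup_left hu')⟩ :
            (M' ⊔ Ma : Submodule R M)) =
            Submodule.inclusion (le_sup_left : M' ≤ M' ⊔ Ma) ⟨b • u, M'.smul_mem b hu'⟩ := by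
          apply Subtype.ext; rfl
        rw [heq]; exact h0
  obtain ⟨M', hfg, hu', c₀, hc₀, e₁, H⟩ := key s hus
  obtain ⟨d, hd, e₂, hdx⟩ := hx
  -- `x • u ∈ (0)* of M'`
  have main := mem_ftc_bot (p := p) M' hfg (x • ⟨u, hu'⟩) (c₀ * d)
    (Ro.mul_mem hc₀ hd) (max e₁ e₂) ?_
  · show x • u ∈ finitisticTC R p ⊥; simpa using main
  intro e he
  set q := p ^ e with hq
  -- subclaim: `c₀ ⊗ (y • u) = 0` for all `y ∈ I`
  have Q : ∀ y ∈ I, FrobAlg.mk R p e c₀ ⊗ₜ[R] (y • (⟨u, hu'⟩ : M')) =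
      (0 : FrobAlg R p e ⊗[R] M') := by
    intro y hy
    rw [← hs] at hy
    induction hy using Submodule.span_induction with
    | mem a hmem =>
      have heq : a • (⟨u, hu'⟩ : M') = ⟨a • u, M'.smul_mem a hu'⟩ := by
        apply Subtype.ext; rfl
      rw [heq]
      exact H a hmem e (le_of_max_le_left he)
    | zero => rw [zero_smul, TensorProduct.tmul_zero]
    | add y z _ _ hyy hzz => rw [add_smul, TensorProduct.tmul_add, hyy, hzz, add_zero]
    | smul r y _ hyy =>
      rw [smul_eq_mul, mul_smul, TensorProduct.tmul_smul, hyy, smul_zero]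
  -- claim: `(c₀ * z) ⊗ u = 0` for all `z` in the Frobenius power of `I`
  have P : ∀ z ∈ frobeniusPower R I q,
      FrobAlg.mk R p e (c₀ * z) ⊗ₜ[R] (⟨u, hu'⟩ : M') = (0 : FrobAlg R p e ⊗[R] M') := by
    intro z hz
    induction hz using Submodule.span_induction with
    | mem w hmem =>
      obtain ⟨y, hy, rfl⟩ := hmem
      have h1 : FrobAlg.mk R p e (c₀ * y ^ q) = y • FrobAlg.mk R p e c₀ := by
        rw [frobAlg_smul, ← hq]
        show c₀ * y ^ q = y ^ q * c₀
        ring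
      rw [h1, TensorProduct.smul_tmul]
      exact Q y hy
    | zero => rw [mul_zero]; show (0 : FrobAlg R p e) ⊗ₜ[R] _ = _; rw [TensorProduct.zero_tmul]
    | add y z _ _ hyy hzz =>
      rw [mul_add]
      show (FrobAlg.mk R p e (c₀ * y) + FrobAlg.mk R p e (c₀ * z)) ⊗ₜ[R] _ = _
      rw [TensorProduct.add_tmul, hyy, hzz, add_zero]
    | smul r z _ hzz =>
      have h2 : FrobAlg.mk R p e (c₀ * r • z) ⊗ₜ[R] (⟨u, hu'⟩ : M') =
          (FrobAlg.mk R p e r) • (FrobAlg.mk R p e (c₀ * z) ⊗ₜ[R] (⟨u, hu'⟩ : M')) := by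
        rw [TensorProduct.smul_tmul', smul_eq_mul]
        congr 1
        show c₀ * (r * z) = r * (c₀ * z)
        ring
      rw [h2, hzz, smul_zero]
  have hP := P (d * x ^ q) (hdx e (le_of_max_le_right he))
  have h2 : FrobAlg.mk R p e (c₀ * d) ⊗ₜ[R] (x • (⟨u, hu'⟩ : M')) =
      FrobAlg.mk R p e (c₀ * (d * x ^ q)) ⊗ₜ[R] (⟨u, hu'⟩ : M') := by
    rw [TensorProduct.tmul_smul, TensorProduct.smul_tmul', frobAlg_smul, ← hq]
    congr 1
    show x ^ q * (c₀ * d) = c₀ * (d * x ^ q)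
    ring
  rw [h2]
  exact hP

lemma idealTC_self_subset (p : ℕ) [ExpChar R p] (I : Ideal R) :
    (I : Set R) ⊆ idealTC R p I := by
  intro a ha
  refine ⟨1, Ro.one_mem, 0, fun e _ => ?_⟩
  rw [one_mul]
  exact Submodule.subset_span ⟨a, ha, rfl⟩

end AuxTC

section AuxSmall

variable {R : Type u} [CommRing R]

lemma small_of_fibers {B : Type v} {C : Type w} (f : B → C) [Small.{x} C]
    (hf : ∀ c : C, Small.{x} (f ⁻¹' {c})) : Small.{x} B := by
  haveI : ∀ c : C, Small.{x} {b : B // f b = c} := fun c => hf c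
  exact small_of_injective (Equiv.sigmaFiberEquiv f).symm.injective

lemma small_quot_pow [IsNoetherianRing R] (m : Ideal R) [Small.{x} (R ⧸ m)] :
    ∀ n : ℕ, Small.{x} (R ⧸ m ^ n)
  | 0 => by
    have : Subsingleton (R ⧸ m ^ 0) := by
      constructor
      intro a b
      obtain ⟨a, rfl⟩ := Ideal.Quotient.mk_surjective a
      obtain ⟨b, rfl⟩ := Ideal.Quotient.mk_surjective b
      refine Ideal.Quotient.eq.2 ?_
      rw [pow_zero, Ideal.one_eq_top]
      exact Submodule.mem_top
    infer_instance
  | (n + 1) => by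
    classical
    have hn : Small.{x} (R ⧸ m ^ n) := small_quot_pow m n
    set f := Ideal.Quotient.factor (S := m ^ (n + 1)) (T := m ^ n) (Ideal.pow_le_pow_right n.le_succ)
      with hfdef
    obtain ⟨d, t, ht⟩ := Submodule.fg_iff_exists_fin_generating_family.1
      (IsNoetherian.noetherian (m ^ n))
    set sec : R ⧸ m → R := Function.surjInv Ideal.Quotient.mk_surjective with hsec
    set ψ : (Fin d → R ⧸ m) → R ⧸ m ^ (n + 1) :=
      fun v => Ideal.Quotient.mk _ (∑ i, sec (v i) * t i) with hψ
    have hker : {y : R ⧸ m ^ (n + 1) | f y = 0} ⊆ Set.range ψ := by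
      rintro y hy
      obtain ⟨r, rfl⟩ := Ideal.Quotient.mk_surjective y
      have hy' : Ideal.Quotient.mk (m ^ n) r = 0 := by
        rw [Set.mem_setOf_eq, hfdef, Ideal.Quotient.factor_mk] at hy
        exact hy
      have hr : r ∈ Submodule.span R (Set.range t) := by
        rw [ht]
        exact (Ideal.Quotient.eq_zero_iff_mem).1 hy'
      obtain ⟨cc, hcc⟩ := (Submodule.mem_span_range_iff_exists_fun R).1 hr
      refine ⟨fun i => Ideal.Quotient.mk m (cc i), ?_⟩
      show Ideal.Quotient.mk _ (∑ i, sec (Ideal.Quotient.mk m (cc i)) * t i) = _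
      rw [Ideal.Quotient.mk_eq_mk_iff_sub_mem, ← hcc, ← Finset.sum_sub_distrib]
      refine Submodule.sum_mem _ (fun i _ => ?_)
      have hsub : sec (Ideal.Quotient.mk m (cc i)) - cc i ∈ m := by
        have h1 : Ideal.Quotient.mk m (sec (Ideal.Quotient.mk m (cc i))) =
            Ideal.Quotient.mk m (cc i) :=
          Function.surjInv_eq Ideal.Quotient.mk_surjective _
        exact (Ideal.Quotient.mk_eq_mk_iff_sub_mem _ _).1 h1
      have hti : t i ∈ m ^ n := by
        rw [← ht]
        exact Submodule.subset_span (Set.mem_range_self i)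
      have hmul : (sec (Ideal.Quotient.mk m (cc i)) - cc i) * t i ∈ m * m ^ n :=
        Ideal.mul_mem_mul hsub hti
      rw [pow_succ']
      have : sec (Ideal.Quotient.mk m (cc i)) * t i - cc i • t i =
          (sec (Ideal.Quotient.mk m (cc i)) - cc i) * t i := by
        rw [smul_eq_mul, sub_mul]
      rw [this]
      exact hmul
    have hksmall : Small.{x} {y : R ⧸ m ^ (n + 1) | f y = 0} := small_subset hker
    refine small_of_fibers f (fun c => ?_)
    rcases Set.eq_empty_or_nonempty (f ⁻¹' {c}) with hc | ⟨b₀, hb₀⟩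
    · rw [hc]
      infer_instance
    · refine @small_of_injective _ _ hksmall
        (fun y : f ⁻¹' {c} => (⟨y.1 - b₀, ?_⟩ : {y : R ⧸ m ^ (n + 1) | f y = 0})) ?_
      · have hy : f y.1 = c := y.2
        have hb : f b₀ = c := hb₀
        show f (y.1 - b₀) = 0
        rw [map_sub, hy, hb, sub_self]
      · intro y z hyz
        apply Subtype.ext
        have := congrArg Subtype.val hyz
        simpa [sub_left_inj] using this

lemma small_of_complete_local [IsNoetherianRing R] [IsLocalRing R]
    [IsAdicComplete (IsLocalRing.maximalIdeal R) R]
    (hsmall : Small.{x} (IsLocalRing.ResidueField R)) : Small.{x} R := by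
  set m := IsLocalRing.maximalIdeal R with hm
  haveI : Small.{x} (R ⧸ m) := hsmall
  haveI : ∀ n, Small.{x} (R ⧸ m ^ n) := small_quot_pow m
  refine small_of_injective
    (f := fun r => fun n : ℕ => Ideal.Quotient.mk (m ^ n) r) ?_
  intro a b hab
  have h : ∀ n : ℕ, a - b ∈ m ^ n := fun n =>
    (Ideal.Quotient.mk_eq_mk_iff_sub_mem a b).1 (congrFun hab n)
  have hz : a - b = 0 := by
    refine IsHausdorff.haus (inferInstance : IsHausdorff m R) (a - b) (fun n => ?_)
    rw [SModEq.zero]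
    have h1 : (a - b) • (1 : R) ∈ (m ^ n • ⊤ : Submodule R R) :=
      Submodule.smul_mem_smul (h n) Submodule.mem_top
    simpa using h1
  exact sub_eq_zero.1 hz

end AuxSmall

/-- For a complete Noetherian local ring `(R,m,K)` of prime
characteristic `p` possessing a test element, and an Artinian `R`-module `M`, the module
`τ^{fg}_M = Ann_{M^∨}(0*fg_M) ⊆ M^∨ = Hom_R(M, E_R(K))` satisfies
`I* · τ^{fg}_M = I · τ^{fg}_M` for every ideal `I` of `R`. -/
theorem tight_closure_strong_test_module_fg
    (R : Type u) [CommRing R] [IsNoetherianRing R] [IsLocalRing R]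
    (p : ℕ) [Fact p.Prime] [CharP R p]
    [IsAdicComplete (IsLocalRing.maximalIdeal R) R]
    (htest : ∃ c : R, IsTestElement R p c)
    (M : Type v) [AddCommGroup M] [Module R M] [IsArtinian R M]
    (E : Type w) [AddCommGroup E] [Module R E]
    (hE : IsInjectiveHull R (IsLocalRing.ResidueField R) E)
    (I : Ideal R) :
    setSMulSubmodule R (idealTC R p I)
        (annihilatorIn R (E := E) (finitisticTC R p (⊥ : Submodule R M))) =
      I • annihilatorIn R (E := E) (finitisticTC R p (⊥ : Submodule R M)) := by
  classical
  set τ := annihilatorIn R (E := E) (finitisticTC R p (⊥ : Submodule R M)) with hτ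
  apply le_antisymm
  · -- hard direction: `span (I* • τ) ≤ I • τ`
    rw [setSMulSubmodule, Submodule.span_le]
    rintro z hz
    rw [Set.mem_smul] at hz
    obtain ⟨x, hx, f, hf, rfl⟩ := hz
    -- generators of I
    obtain ⟨n, a, ha⟩ :=
      Submodule.fg_iff_exists_fin_generating_family.1 (IsNoetherian.noetherian I)
    set N₀ := ftcSub R p M with hN₀
    set W : Submodule R (Fin n → M) := Submodule.pi Set.univ (fun _ => N₀) with hW
    set Ψ : M →ₗ[R] (Fin n → M) := LinearMap.pi (fun i => a i • LinearMap.id) with hΨ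
    set g : M →ₗ[R] ((Fin n → M) ⧸ W) := W.mkQ.comp Ψ with hg
    set h : M →ₗ[R] E := x • f with hh
    have hfz : ∀ z ∈ finitisticTC R p (⊥ : Submodule R M), f z = 0 := hf
    have hker : LinearMap.ker g ≤ LinearMap.ker h := by
      intro u hu
      rw [LinearMap.mem_ker] at hu ⊢
      have hWmem : Ψ u ∈ W := by
        rwa [hg, LinearMap.comp_apply, Submodule.mkQ_apply,
          Submodule.Quotient.mk_eq_zero] at hu
      have hi : ∀ i : Fin n, a i • u ∈ N₀ := by
        intro i
        have h1 := (Submodule.mem_pi).1 hWmem i (Set.mem_univ i)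
        simpa [hΨ, LinearMap.pi_apply] using h1
      have hIu : ∀ b ∈ I, b • u ∈ N₀ := by
        intro b hb
        have hle : I ≤ Submodule.comap (LinearMap.toSpanSingleton R M u) N₀ := by
          rw [← ha, Submodule.span_le]
          rintro _ ⟨i, rfl⟩
          show a i • u ∈ N₀
          exact hi i
        exact hle hb
      have hxu : x • u ∈ N₀ := ftc_closure hIu hx
      show h u = 0
      rw [hh, LinearMap.smul_apply, ← map_smul]
      exact hfz (x • u) hxu
    haveI hSmallK : Small.{w} (IsLocalRing.ResidueField R) := by
      obtain ⟨ι, hι, -⟩ := hE.2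
      exact small_of_injective hι
    haveI : Small.{w} R := small_of_complete_local hSmallK
    have hbaer : Module.Baer R E := Module.Baer.of_injective hE.1
    set gq : (M ⧸ LinearMap.ker g) →ₗ[R] ((Fin n → M) ⧸ W) :=
      (LinearMap.ker g).liftQ g le_rfl with hgq
    have hgqinj : Function.Injective gq := by
      rw [← LinearMap.ker_eq_bot]
      exact Submodule.ker_liftQ_eq_bot _ _ _ le_rfl
    set h' : (M ⧸ LinearMap.ker g) →ₗ[R] E := (LinearMap.ker g).liftQ h hker with hh'
    obtain ⟨G, hG⟩ := hbaer.extension_property gq hgqinj h'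
    have hGg : ∀ u : M, G (g u) = h u := by
      intro u
      have h1 : g u = gq (Submodule.Quotient.mk u) := (Submodule.liftQ_apply _ g u).symm
      rw [h1, ← LinearMap.comp_apply, hG, hh', Submodule.liftQ_apply]
    set gi : Fin n → (M →ₗ[R] E) :=
      fun i => G.comp (W.mkQ.comp (LinearMap.single R (fun _ => M) i)) with hgi
    have hgiτ : ∀ i, gi i ∈ τ := by
      intro i
      show ∀ z ∈ finitisticTC R p (⊥ : Submodule R M), (gi i) z = 0
      intro z hz
      have hmem : (LinearMap.single R (fun _ => M) i) z ∈ W := by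
        rw [hW, Submodule.mem_pi]
        intro j _
        rcases eq_or_ne j i with rfl | hji
        · simp only [LinearMap.coe_single, Pi.single_eq_same]; exact hz
        · simp only [LinearMap.coe_single, Pi.single_eq_of_ne hji]
          exact N₀.zero_mem
      show G (W.mkQ ((LinearMap.single R (fun _ => M) i) z)) = 0
      rw [Submodule.mkQ_apply, (Submodule.Quotient.mk_eq_zero W).2 hmem, map_zero]
    have hsum : x • f = ∑ i, a i • gi i := by
      ext u
      rw [LinearMap.sum_apply]
      have hterm : ∀ i : Fin n, (a i • gi i) u =
          G (W.mkQ ((LinearMap.single R (fun _ => M) i) (a i • u))) := by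
        intro i
        rw [LinearMap.smul_apply]
        show a i • G (W.mkQ ((LinearMap.single R (fun _ => M) i) u)) = _
        rw [← map_smul, ← map_smul, ← map_smul]
      rw [Finset.sum_congr rfl (fun i _ => hterm i), ← map_sum, ← map_sum]
      have hΨu : (∑ i, (LinearMap.single R (fun _ => M) i) (a i • u)) = Ψ u := by
        have h2 : ∀ i : Fin n,
            (LinearMap.single R (fun _ => M) i) (a i • u) = Pi.single i (a i • u) :=
          fun i => rfl
        have h3 : Ψ u = fun i => a i • u := by
          funext i
          rw [hΨ, LinearMap.pi_apply, LinearMap.smul_apply, LinearMap.id_apply]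
        rw [funext h2, h3]
        exact Finset.univ_sum_single (fun i => a i • u)
      rw [hΨu]
      have h4 : G (W.mkQ (Ψ u)) = h u := hGg u
      rw [h4, hh]
    rw [show h = x • f from hh, hsum]
    refine Submodule.sum_mem _ (fun i _ => Submodule.smul_mem_smul ?_ (hgiτ i))
    rw [← ha]
    exact Submodule.subset_span (Set.mem_range_self i)
  · -- easy direction: `I • τ ≤ span (I* • τ)`
    rw [setSMulSubmodule]
    refine Submodule.smul_le.2 (fun r hr fm hfm => ?_)
    exact Submodule.subset_span (Set.smul_mem_smul (idealTC_self_subset p I hr) hfm)
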